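/- ‖μ_t − θ*‖_{Σ_t^{-1} Σ̃_t Σ_t^{-1}} ≤ sup_{θ ∈ ℝ^d, ‖θ‖ ≤ S} ‖Σ_0^{-1}(μ_0 − θ)‖_{Σ̃_t} + σ^{-2} ‖ Σ_{i=1}^t w_i x_i η_i ‖_{Σ̃_t}. (This is a purely deterministic inequality; no probabilistic assumptions on the η_i are needed.) -/

import Mathlib

open Matrix Finset

/-- Euclidean norm of a vector in `Fin d → ℝ`. -/
noncomputable def eucNorm {d : ℕ} (v : Fin d → ℝ) : ℝ := Real.sqrt (v ⬝ᵥ v)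

/-- Weighted norm `‖v‖_M = √(vᵀ M v)`. -/
noncomputable def matNorm {d : ℕ} (M : Matrix (Fin d) (Fin d) ℝ) (v : Fin d → ℝ) : ℝ :=
  Real.sqrt (v ⬝ᵥ M.mulVec v)

/-- `Σ_t := (Σ_0⁻¹ + σ⁻² ∑ᵢ wᵢ xᵢxᵢᵀ)⁻¹` -/
noncomputable def SigM (d : ℕ) (σ : ℝ) (w : ℕ → ℝ) (x : ℕ → Fin d → ℝ)
    (S0 : Matrix (Fin d) (Fin d) ℝ) (t : ℕ) : Matrix (Fin d) (Fin d) ℝ :=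
  (S0⁻¹ + (σ ^ 2)⁻¹ • ∑ i ∈ Finset.Icc 1 t, w i • vecMulVec (x i) (x i))⁻¹

/-- `Σ̃_t := (Σ̃_0⁻¹ + σ⁻² ∑ᵢ wᵢ² xᵢxᵢᵀ)⁻¹` -/
noncomputable def TilM (d : ℕ) (σ : ℝ) (w : ℕ → ℝ) (x : ℕ → Fin d → ℝ)
    (St0 : Matrix (Fin d) (Fin d) ℝ) (t : ℕ) : Matrix (Fin d) (Fin d) ℝ :=
  (St0⁻¹ + (σ ^ 2)⁻¹ • ∑ i ∈ Finset.Icc 1 t, w i ^ 2 • vecMulVec (x i) (x i))⁻¹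

/-- `μ_t := Σ_t (Σ_0⁻¹ μ_0 + σ⁻² ∑ᵢ wᵢ yᵢ xᵢ)` -/
noncomputable def muV (d : ℕ) (σ : ℝ) (w : ℕ → ℝ) (x : ℕ → Fin d → ℝ) (y : ℕ → ℝ)
    (S0 : Matrix (Fin d) (Fin d) ℝ) (μ0 : Fin d → ℝ) (t : ℕ) : Fin d → ℝ :=
  (SigM d σ w x S0 t).mulVec
    (S0⁻¹.mulVec μ0 + (σ ^ 2)⁻¹ • ∑ i ∈ Finset.Icc 1 t, (w i * y i) • x i)

section helpers
variable {d : ℕ}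

lemma vecMulVec_mulVec' (x v : Fin d → ℝ) :
    (vecMulVec x x).mulVec v = (x ⬝ᵥ v) • x := by
  ext i
  simp only [mulVec, dotProduct, vecMulVec_apply, Pi.smul_apply, smul_eq_mul]
  rw [Finset.sum_mul]
  apply Finset.sum_congr rfl
  intro j _
  ring

lemma posSemidef_vecMulVec' (x : Fin d → ℝ) : (vecMulVec x x).PosSemidef := by
  refine PosSemidef.of_dotProduct_mulVec_nonneg ?_ ?_
  · ext i j
    simp [vecMulVec_apply, conjTranspose_apply, mul_comm]
  · intro v
    rw [vecMulVec_mulVec']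
    simp only [star_trivial, dotProduct_smul, smul_eq_mul]
    rw [dotProduct_comm]
    exact mul_self_nonneg _

lemma posSemidef_smul' {M : Matrix (Fin d) (Fin d) ℝ} (hM : M.PosSemidef) {c : ℝ}
    (hc : 0 ≤ c) : (c • M).PosSemidef := by
  refine PosSemidef.of_dotProduct_mulVec_nonneg ?_ ?_
  · ext i j
    have := congrFun (congrFun hM.1 i) j
    simp only [conjTranspose_apply, Matrix.smul_apply, smul_eq_mul, star_trivial] at this ⊢
    rw [this]
  · intro v
    rw [smul_mulVec, dotProduct_smul]
    exact mul_nonneg hc (hM.dotProduct_mulVec_nonneg v)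

lemma posSemidef_sum' {ι : Type*} (s : Finset ι) (f : ι → Matrix (Fin d) (Fin d) ℝ)
    (h : ∀ i ∈ s, (f i).PosSemidef) : (∑ i ∈ s, f i).PosSemidef := by
  induction s using Finset.cons_induction with
  | empty => simpa using Matrix.PosSemidef.zero
  | cons a s ha ih =>
    rw [Finset.sum_cons]
    exact (h a (Finset.mem_cons_self a s)).add (ih fun i hi => h i (Finset.mem_cons_of_mem hi))

lemma eucNorm_eq_norm (v : Fin d → ℝ) :
    eucNorm v = ‖(WithLp.equiv 2 (Fin d → ℝ)).symm v‖ := by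
  rw [eucNorm, EuclideanSpace.norm_eq]
  congr 1
  simp [dotProduct, sq, Real.norm_eq_abs, abs_mul_abs_self]

lemma eucNorm_add_le (a b : Fin d → ℝ) : eucNorm (a + b) ≤ eucNorm a + eucNorm b := by
  simp only [eucNorm_eq_norm]
  rw [show (WithLp.equiv 2 (Fin d → ℝ)).symm (a + b)
      = (WithLp.equiv 2 (Fin d → ℝ)).symm a + (WithLp.equiv 2 (Fin d → ℝ)).symm b from rfl]
  exact norm_add_le _ _

lemma eucNorm_smul (c : ℝ) (v : Fin d → ℝ) : eucNorm (c • v) = |c| * eucNorm v := by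
  simp only [eucNorm_eq_norm]
  rw [show (WithLp.equiv 2 (Fin d → ℝ)).symm (c • v)
      = c • (WithLp.equiv 2 (Fin d → ℝ)).symm v from rfl]
  rw [norm_smul, Real.norm_eq_abs]

open scoped MatrixOrder in
lemma matNorm_eq_eucNorm {M : Matrix (Fin d) (Fin d) ℝ} (hM : M.PosSemidef)
    (v : Fin d → ℝ) : matNorm M v = eucNorm ((CFC.sqrt M).mulVec v) := by
  rw [matNorm, eucNorm]
  congr 1
  conv_lhs => rw [← CFC.sqrt_mul_sqrt_self M hM.nonneg]
  rw [← mulVec_mulVec, dotProduct_mulVec, ← mulVec_transpose]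
  congr 1
  rw [← conjTranspose_eq_transpose_of_trivial, (CFC.sqrt_nonneg M).posSemidef.1]

lemma matNorm_add_le {M : Matrix (Fin d) (Fin d) ℝ} (hM : M.PosSemidef)
    (a b : Fin d → ℝ) : matNorm M (a + b) ≤ matNorm M a + matNorm M b := by
  rw [matNorm_eq_eucNorm hM, matNorm_eq_eucNorm hM, matNorm_eq_eucNorm hM, mulVec_add]
  exact eucNorm_add_le _ _

lemma matNorm_smul {M : Matrix (Fin d) (Fin d) ℝ} (hM : M.PosSemidef)
    (c : ℝ) (v : Fin d → ℝ) : matNorm M (c • v) = |c| * matNorm M v := by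
  rw [matNorm_eq_eucNorm hM, matNorm_eq_eucNorm hM, mulVec_smul, eucNorm_smul]

end helpers

lemma sum_mulVec' {d : ℕ} {ι : Type*} (s : Finset ι) (f : ι → Matrix (Fin d) (Fin d) ℝ)
    (v : Fin d → ℝ) : (∑ i ∈ s, f i).mulVec v = ∑ i ∈ s, (f i).mulVec v := by
  induction s using Finset.cons_induction with
  | empty => simp
  | cons a s ha ih => rw [Finset.sum_cons, Finset.sum_cons, add_mulVec, ih]

lemma continuous_eucNorm {d : ℕ} : Continuous (eucNorm (d := d)) :=
  Real.continuous_sqrt.comp (continuous_id.dotProduct continuous_id)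

theorem stmt14 (d t : ℕ) (hd : 1 ≤ d) (ht : 1 ≤ t)
    (σ S : ℝ) (hσ : 0 < σ) (hS : 0 ≤ S)
    (x : ℕ → Fin d → ℝ) (w : ℕ → ℝ) (hw : ∀ i, 1 ≤ i → i ≤ t → 0 < w i)
    (η : ℕ → ℝ) (θstar : Fin d → ℝ) (hθ : eucNorm θstar ≤ S)
    (y : ℕ → ℝ) (hy : ∀ i, 1 ≤ i → i ≤ t → y i = θstar ⬝ᵥ x i + η i)
    (μ0 : Fin d → ℝ) (S0 St0 : Matrix (Fin d) (Fin d) ℝ)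
    (hS0 : S0.PosDef) (hSt0 : St0.PosDef) :
    matNorm ((SigM d σ w x S0 t)⁻¹ * TilM d σ w x St0 t * (SigM d σ w x S0 t)⁻¹)
        (muV d σ w x y S0 μ0 t - θstar) ≤
      (⨆ θ : {θ : Fin d → ℝ // eucNorm θ ≤ S},
          matNorm (TilM d σ w x St0 t) (S0⁻¹.mulVec (μ0 - (θ : Fin d → ℝ))))
        + (σ ^ 2)⁻¹ *
          matNorm (TilM d σ w x St0 t) (∑ i ∈ Finset.Icc 1 t, (w i * η i) • x i) := by
  classical
  set c : ℝ := (σ ^ 2)⁻¹ with hc_def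
  have hc : (0 : ℝ) ≤ c := by positivity
  set A : Matrix (Fin d) (Fin d) ℝ :=
    S0⁻¹ + c • ∑ i ∈ Finset.Icc 1 t, w i • vecMulVec (x i) (x i) with hA_def
  set B : Matrix (Fin d) (Fin d) ℝ :=
    St0⁻¹ + c • ∑ i ∈ Finset.Icc 1 t, w i ^ 2 • vecMulVec (x i) (x i) with hB_def
  have hA : A.PosDef :=
    hS0.inv.add_posSemidef (posSemidef_smul'
      (posSemidef_sum' _ _ (fun i hi => posSemidef_smul' (posSemidef_vecMulVec' (x i))
        (le_of_lt (hw i (Finset.mem_Icc.mp hi).1 (Finset.mem_Icc.mp hi).2)))) hc)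
  have hB : B.PosDef :=
    hSt0.inv.add_posSemidef (posSemidef_smul'
      (posSemidef_sum' _ _ (fun i _ => posSemidef_smul' (posSemidef_vecMulVec' (x i))
        (sq_nonneg (w i)))) hc)
  have hAdet : IsUnit A.det := (Matrix.isUnit_iff_isUnit_det A).mp hA.isUnit
  set T : Matrix (Fin d) (Fin d) ℝ := TilM d σ w x St0 t with hT_def
  have hTB : T = B⁻¹ := rfl
  have hT : T.PosSemidef := (hTB ▸ hB.inv).posSemidef
  have hSig : SigM d σ w x S0 t = A⁻¹ := rfl
  have hSigInv : (SigM d σ w x S0 t)⁻¹ = A := by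
    rw [hSig, Matrix.nonsing_inv_nonsing_inv A hAdet]
  set v1 : Fin d → ℝ := S0⁻¹.mulVec (μ0 - θstar) with hv1_def
  set v2 : Fin d → ℝ := ∑ i ∈ Finset.Icc 1 t, (w i * η i) • x i with hv2_def
  -- step 1 : μ_t - θ* = A⁻¹ (v1 + c • v2)
  have hAθ : A.mulVec θstar =
      S0⁻¹.mulVec θstar + c • ∑ i ∈ Finset.Icc 1 t, (w i * (x i ⬝ᵥ θstar)) • x i := by
    rw [hA_def, add_mulVec, smul_mulVec]
    congr 2
    rw [sum_mulVec']
    apply Finset.sum_congr rfl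
    intro i _
    rw [smul_mulVec, vecMulVec_mulVec', smul_smul]
  have hμ : muV d σ w x y S0 μ0 t - θstar = A⁻¹.mulVec (v1 + c • v2) := by
    have hth : θstar = A⁻¹.mulVec (A.mulVec θstar) := by
      rw [mulVec_mulVec, Matrix.nonsing_inv_mul A hAdet, one_mulVec]
    rw [muV, hSig]
    conv_lhs => rw [hth]
    rw [← mulVec_sub]
    congr 1
    rw [hAθ, add_sub_add_comm, ← mulVec_sub, ← smul_sub, ← Finset.sum_sub_distrib]
    have hsum : ∑ i ∈ Finset.Icc 1 t, ((w i * y i) • x i - (w i * (x i ⬝ᵥ θstar)) • x i) = v2 := by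
      rw [hv2_def]
      apply Finset.sum_congr rfl
      intro i hi
      obtain ⟨h1i, h2i⟩ := Finset.mem_Icc.mp hi
      rw [← sub_smul]
      congr 1
      rw [hy i h1i h2i, dotProduct_comm]
      ring
    rw [hsum]
  -- step 2 : quadratic form collapses
  have hAT : Aᵀ = A := by
    rw [← conjTranspose_eq_transpose_of_trivial, hA.1]
  have hquad : matNorm (A * T * A) (A⁻¹.mulVec (v1 + c • v2)) = matNorm T (v1 + c • v2) := by
    rw [matNorm, matNorm]
    congr 1
    rw [mulVec_mulVec, Matrix.mul_assoc (A * T) A A⁻¹, Matrix.mul_nonsing_inv A hAdet,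
      Matrix.mul_one, ← mulVec_mulVec, dotProduct_mulVec]
    congr 1
    rw [← mulVec_transpose, hAT, mulVec_mulVec, Matrix.mul_nonsing_inv A hAdet, one_mulVec]
  -- step 3 : boundedness of the sup family
  have hg : Continuous fun θ : Fin d → ℝ => matNorm T (S0⁻¹.mulVec (μ0 - θ)) := by
    have hv : Continuous fun θ : Fin d → ℝ => S0⁻¹.mulVec (μ0 - θ) :=
      continuous_const.matrix_mulVec (continuous_const.sub continuous_id)
    exact Real.continuous_sqrt.comp
      (hv.dotProduct (continuous_const.matrix_mulVec hv))
  have hK : IsCompact {θ : Fin d → ℝ | eucNorm θ ≤ S} := by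
    apply (isCompact_closedBall (0 : Fin d → ℝ) S).of_isClosed_subset
    · exact isClosed_le continuous_eucNorm continuous_const
    · intro θ hθ'
      rw [Metric.mem_closedBall, dist_zero_right]
      rw [pi_norm_le_iff_of_nonneg hS]
      intro i
      have h1 : ‖θ i‖ = Real.sqrt (θ i * θ i) := by
        rw [Real.sqrt_mul_self_eq_abs, Real.norm_eq_abs]
      have h2 : θ i * θ i ≤ θ ⬝ᵥ θ :=
        Finset.single_le_sum (fun j _ => mul_self_nonneg (θ j)) (Finset.mem_univ i)
      calc ‖θ i‖ = Real.sqrt (θ i * θ i) := h1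
        _ ≤ eucNorm θ := Real.sqrt_le_sqrt h2
        _ ≤ S := hθ'
  haveI : CompactSpace {θ : Fin d → ℝ // eucNorm θ ≤ S} :=
    isCompact_iff_compactSpace.mp hK
  have hbdd : BddAbove (Set.range fun θ : {θ : Fin d → ℝ // eucNorm θ ≤ S} =>
      matNorm T (S0⁻¹.mulVec (μ0 - (θ : Fin d → ℝ)))) :=
    (isCompact_range (hg.comp continuous_subtype_val)).bddAbove
  have hsup : matNorm T v1 ≤ ⨆ θ : {θ : Fin d → ℝ // eucNorm θ ≤ S},
      matNorm T (S0⁻¹.mulVec (μ0 - (θ : Fin d → ℝ))) :=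
    le_ciSup hbdd ⟨θstar, hθ⟩
  -- conclusion
  have htri : matNorm T (v1 + c • v2) ≤ matNorm T v1 + c * matNorm T v2 := by
    have := matNorm_add_le hT v1 (c • v2)
    rwa [matNorm_smul hT, abs_of_nonneg hc] at this
  calc matNorm ((SigM d σ w x S0 t)⁻¹ * T * (SigM d σ w x S0 t)⁻¹)
        (muV d σ w x y S0 μ0 t - θstar)
      = matNorm T (v1 + c • v2) := by rw [hμ, hSigInv, hquad]
    _ ≤ matNorm T v1 + c * matNorm T v2 := htri
    _ ≤ (⨆ θ : {θ : Fin d → ℝ // eucNorm θ ≤ S},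
          matNorm T (S0⁻¹.mulVec (μ0 - (θ : Fin d → ℝ)))) + c * matNorm T v2 := by
        exact add_le_add_left hsup _
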